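/- Let p : ℤ → ℝ satisfy (H1) and (H2), and let v_1 ≠ v_2 be real numbers. Then the reduced graph G̃(v_1,v_2) contains a two-colored two-way infinite path (respectively, a two-colored cycle) if and only if the graph G(v_1,v_2) contains a two-colored two-way infinite path (respectively, a two-colored cycle). -/
import Mathlib


open MeasureTheory Real Complex
open scoped ENNReal

/-- λ_k(v) = p(k) - k v -/
noncomputable def lamk (p : ℤ → ℝ) (v : ℝ) (k : ℤ) : ℝ := p k - k * v

/-- Ξ_k(v) = {m : λ_m(v) = λ_k(v)} -/
def XiSet (p : ℤ → ℝ) (v : ℝ) (k : ℤ) : Set ℤ := {m | lamk p v m = lamk p v k}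

/-- Π(v) = {k : ∃ m ≠ k, λ_k(v) = λ_m(v)} -/
def PiV (p : ℤ → ℝ) (v : ℝ) : Set ℤ := {k | ∃ m : ℤ, m ≠ k ∧ lamk p v k = lamk p v m}

/-- Λ(v) = {λ_k(v) : k ∈ ℤ} -/
def LamV (p : ℤ → ℝ) (v : ℝ) : Set ℝ := Set.range (lamk p v)

/-- γ'(v) = sup over finite W ⊆ Λ(v) of the separation gap of Λ(v) \ W, valued in ℝ≥0∞. -/
noncomputable def gammaP (p : ℤ → ℝ) (v : ℝ) : ℝ≥0∞ :=
  ⨆ (W : Finset ℝ) (_ : ↑W ⊆ LamV p v),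
    ⨅ (a : ℝ) (_ : a ∈ LamV p v \ ↑W) (b : ℝ) (_ : b ∈ LamV p v \ ↑W) (_ : a ≠ b),
      ENNReal.ofReal |a - b|

/-- The solution u(t,x) = ∑_k c_k e^{i(p(k)t + kx)} of ∂_t u = iP(D)u. -/
noncomputable def solD (p : ℤ → ℝ) (c : ℤ → ℂ) (t x : ℝ) : ℂ :=
  ∑' k : ℤ, c k * Complex.exp (Complex.I * ((p k : ℂ) * (t : ℂ) + (k : ℂ) * (x : ℂ)))

/-- Hypothesis (H1): n_k(v) < ∞ for all k, v. -/
def hypH1 (p : ℤ → ℝ) : Prop := ∀ (v : ℝ) (k : ℤ), (XiSet p v k).Finite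

/-- Hypothesis (H2): for each v there is N with n_k(v) ≤ 2 for all k ≥ N. -/
def hypH2 (p : ℤ → ℝ) : Prop :=
  ∀ v : ℝ, ∃ N : ℕ, ∀ k : ℤ, (N : ℤ) ≤ k → (XiSet p v k).ncard ≤ 2

/-- Colored edges of the graph G(v₁,v₂): `true` = red (λ(v₁) agree), `false` = blue. -/
def cedge (p : ℤ → ℝ) (v1 v2 : ℝ) (b : Bool) (k1 k2 : ℤ) : Prop :=
  k1 ≠ k2 ∧ lamk p (if b then v1 else v2) k1 = lamk p (if b then v1 else v2) k2

/-- There is a two-colored cycle of G(v₁,v₂) all of whose vertices lie in S. -/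
def TwoColCycleIn (p : ℤ → ℝ) (v1 v2 : ℝ) (S : Set ℤ) : Prop :=
  ∃ (n : ℕ) (f : ZMod (n + 3) → ℤ) (col : ZMod (n + 3) → Bool),
    Function.Injective f ∧ (∀ i, f i ∈ S) ∧
    (∀ i, cedge p v1 v2 (col i) (f i) (f (i + 1))) ∧
    ∃ i j, col i ≠ col j

/-- Adjacency in G(v₁,v₂) (edge of either color). -/
def gadj (p : ℤ → ℝ) (v1 v2 : ℝ) (k1 k2 : ℤ) : Prop := ∃ b, cedge p v1 v2 b k1 k2

/-- g(v₁,v₂) < ∞ : a uniform finite bound on the sizes of connected components. -/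
def gFinite (p : ℤ → ℝ) (v1 v2 : ℝ) : Prop :=
  ∃ N : ℕ, ∀ k ∈ PiV p v1 ∪ PiV p v2,
    {m | Relation.ReflTransGen (gadj p v1 v2) k m}.Finite ∧
    {m | Relation.ReflTransGen (gadj p v1 v2) k m}.ncard ≤ N

/-- k' is connected to k in color b (`true` = red, `false` = blue): k' = k, or there is
a finite path from k' to k whose last edge has color b. -/
def ConnTo (p : ℤ → ℝ) (v1 v2 : ℝ) (b : Bool) (k' k : ℤ) : Prop :=
  k' = k ∨ ∃ (n : ℕ) (f : Fin (n + 2) → ℤ) (col : Fin (n + 1) → Bool),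
    Function.Injective f ∧
    (∀ i : Fin (n + 1), cedge p v1 v2 (col i) (f i.castSucc) (f i.succ)) ∧
    f 0 = k' ∧ f (Fin.last (n + 1)) = k ∧ col (Fin.last n) = b

/-- The vertex set of the b-portion (red-portion if b = true) of k in G(v₁,v₂). -/
def Portion (p : ℤ → ℝ) (v1 v2 : ℝ) (b : Bool) (k : ℤ) : Set ℤ :=
  {k' | ConnTo p v1 v2 b k' k}

/-- The b-portion of k contains no two-colored cycle and has finitely many vertices. -/
def PortionGood (p : ℤ → ℝ) (v1 v2 : ℝ) (b : Bool) (k : ℤ) : Prop :=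
  (Portion p v1 v2 b k).Finite ∧ ¬ TwoColCycleIn p v1 v2 (Portion p v1 v2 b k)

/-- The vertex set of the reduced graph G̃(v₁,v₂): vertices of G(v₁,v₂) whose
red-portion or blue-portion contains no two-colored cycle and is finite are removed. -/
def ReducedV (p : ℤ → ℝ) (v1 v2 : ℝ) : Set ℤ :=
  (PiV p v1 ∪ PiV p v2) \
    {k | PortionGood p v1 v2 true k ∨ PortionGood p v1 v2 false k}

/-- There is a two-colored two-way infinite path of G(v₁,v₂) with all vertices in S. -/
def TwoColInfPathIn (p : ℤ → ℝ) (v1 v2 : ℝ) (S : Set ℤ) : Prop :=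
  ∃ (f : ℤ → ℤ) (col : ℤ → Bool),
    Function.Injective f ∧ (∀ i, f i ∈ S) ∧
    (∀ i, cedge p v1 v2 (col i) (f i) (f (i + 1))) ∧
    ∃ i j, col i ≠ col j

section
variable (p : ℤ → ℝ) (v1 v2 : ℝ)

lemma cedge_symm {b k1 k2} (h : cedge p v1 v2 b k1 k2) : cedge p v1 v2 b k2 k1 :=
  ⟨h.1.symm, h.2.symm⟩

lemma no_bicolor (hv : v1 ≠ v2) {k1 k2} (h1 : cedge p v1 v2 true k1 k2)
    (h2 : cedge p v1 v2 false k1 k2) : False := by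
  obtain ⟨hne, e1⟩ := h1
  obtain ⟨-, e2⟩ := h2
  simp only [lamk, Bool.false_eq_true, ite_true, ite_false] at e1 e2
  have hk : (k1 : ℝ) ≠ (k2 : ℝ) := by exact_mod_cast hne
  apply hv
  have h3 : (k1 - k2 : ℝ) * v1 = (k1 - k2 : ℝ) * v2 := by nlinarith [e1, e2]
  exact mul_left_cancel₀ (sub_ne_zero.mpr hk) h3

lemma mem_piv_of_edge {b k k'} (h : cedge p v1 v2 b k k') :
    k ∈ PiV p v1 ∪ PiV p v2 := by
  cases b with
  | true => exact Or.inl ⟨k', h.1.symm, by simpa using h.2⟩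
  | false => exact Or.inr ⟨k', h.1.symm, by simpa using h.2⟩

/-- Along a path, every vertex to the left is connected to `f i` with last edge `col (i-1)`. -/
lemma connTo_path_left (f : ℤ → ℤ) (col : ℤ → Bool) (hinj : Function.Injective f)
    (hedge : ∀ i, cedge p v1 v2 (col i) (f i) (f (i + 1))) (i j : ℤ) (hji : j ≤ i) :
    ConnTo p v1 v2 (col (i - 1)) (f j) (f i) := by
  rcases eq_or_lt_of_le hji with rfl | hlt
  · exact Or.inl rfl
  right
  have hd : (1 : ℤ) ≤ i - j := by omega
  obtain ⟨d, hdeq⟩ : ∃ d : ℕ, (d : ℤ) = i - j := ⟨(i - j).toNat, by omega⟩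
  have hd1 : 1 ≤ d := by omega
  refine ⟨d - 1, fun t => f (j + t.val), fun t => col (j + t.val), ?_, ?_, ?_, ?_, ?_⟩
  · intro a b hab
    have := hinj hab
    have : (a.val : ℤ) = b.val := by omega
    exact Fin.ext (by exact_mod_cast this)
  · intro t
    show cedge p v1 v2 (col (j + (t.val : ℤ))) (f (j + (t.castSucc.val : ℤ))) (f (j + (t.succ.val : ℤ)))
    have h1 : (t.castSucc.val : ℤ) = t.val := by simp
    have h2 : (t.succ.val : ℤ) = t.val + 1 := by simp
    rw [h1, h2, ← add_assoc]
    exact hedge (j + t.val)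
  · simp
  · show f (j + ((Fin.last (d - 1 + 1)).val : ℤ)) = f i
    have : ((Fin.last (d - 1 + 1)).val : ℤ) = d := by simp; omega
    rw [this]; congr 1; omega
  · show col (j + ((Fin.last (d - 1)).val : ℤ)) = col (i - 1)
    have : ((Fin.last (d - 1)).val : ℤ) = d - 1 := by simp; omega
    rw [this]; congr 1; omega

lemma portion_left_infinite (f : ℤ → ℤ) (col : ℤ → Bool) (hinj : Function.Injective f)
    (hedge : ∀ i, cedge p v1 v2 (col i) (f i) (f (i + 1))) (i : ℤ) :
    (Portion p v1 v2 (col (i - 1)) (f i)).Infinite := by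
  apply Set.Infinite.mono (s := f '' Set.Iic i)
  · rintro x ⟨j, hj, rfl⟩
    exact connTo_path_left p v1 v2 f col hinj hedge i j hj
  · exact (Set.Iic_infinite i).image hinj.injOn

/-- Reversed-path version: right side, last edge `col i`. -/
lemma portion_right_infinite (f : ℤ → ℤ) (col : ℤ → Bool) (hinj : Function.Injective f)
    (hedge : ∀ i, cedge p v1 v2 (col i) (f i) (f (i + 1))) (i : ℤ) :
    (Portion p v1 v2 (col i) (f i)).Infinite := by
  have hinj' : Function.Injective (fun x : ℤ => f (-x)) := by
    intro a b hab; have := hinj hab; omega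
  have hedge' : ∀ x, cedge p v1 v2 ((fun x => col (-x - 1)) x)
      ((fun x => f (-x)) x) ((fun x => f (-x)) (x + 1)) := by
    intro x
    have := cedge_symm p v1 v2 (hedge (-x - 1))
    simpa [show -x - 1 + 1 = -x by ring, show (-(x + 1) : ℤ) = -x - 1 by ring] using this
  have := portion_left_infinite p v1 v2 (fun x => f (-x)) (fun x => col (-x - 1)) hinj' hedge' (-i)
  simpa [show (-(-i) : ℤ) = i by ring, show (-(-i - 1) - 1 : ℤ) = i by ring] using this

end

section
variable (p : ℤ → ℝ) (v1 v2 : ℝ)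

lemma exists_chg_right (hH1 : hypH1 p) (f : ℤ → ℤ) (col : ℤ → Bool)
    (hinj : Function.Injective f)
    (hedge : ∀ i, cedge p v1 v2 (col i) (f i) (f (i + 1))) (i : ℤ) :
    ∃ t : ℕ, col (i + t) ≠ col (i + t + 1) := by
  by_contra h
  push_neg at h
  have hcol : ∀ t : ℕ, col (i + t) = col i := by
    intro t
    induction t with
    | zero => simp
    | succ t ih =>
      rw [show (i + ((t : ℕ) + 1 : ℕ) : ℤ) = i + t + 1 by push_cast; ring, ← h t]
      exact ih
  set v : ℝ := if col i then v1 else v2 with hv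
  have hlam : ∀ t : ℕ, lamk p v (f (i + t)) = lamk p v (f i) := by
    intro t
    induction t with
    | zero => simp
    | succ t ih =>
      have he := (hedge (i + t)).2
      rw [hcol t] at he
      rw [show (i + ((t : ℕ) + 1 : ℕ) : ℤ) = i + t + 1 by push_cast; ring, ← he, ih]
  have : (XiSet p v (f i)).Infinite := by
    apply Set.infinite_of_injective_forall_mem (f := fun t : ℕ => f (i + t))
    · intro a b hab
      have := hinj hab
      omega
    · intro t
      exact hlam t
  exact this (hH1 v (f i))

lemma exists_chg_left (hH1 : hypH1 p) (f : ℤ → ℤ) (col : ℤ → Bool)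
    (hinj : Function.Injective f)
    (hedge : ∀ i, cedge p v1 v2 (col i) (f i) (f (i + 1))) (i : ℤ) :
    ∃ t : ℕ, col (i - t) ≠ col (i - t + 1) := by
  have hinj' : Function.Injective (fun x : ℤ => f (-x)) := by
    intro a b hab; have := hinj hab; omega
  have hedge' : ∀ x, cedge p v1 v2 ((fun x => col (-x - 1)) x)
      ((fun x => f (-x)) x) ((fun x => f (-x)) (x + 1)) := by
    intro x
    have := cedge_symm p v1 v2 (hedge (-x - 1))
    simpa [show -x - 1 + 1 = -x by ring, show (-(x + 1) : ℤ) = -x - 1 by ring] using this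
  obtain ⟨t, ht⟩ := exists_chg_right p v1 v2 hH1 _ _ hinj' hedge' (-(i + 2))
  refine ⟨t, fun hc => ht ?_⟩
  show col (-(-(i + 2) + t) - 1) = col (-(-(i + 2) + t + 1) - 1)
  rw [show (-(-(i + 2) + t) - 1 : ℤ) = i - t + 1 by ring,
    show (-(-(i + 2) + t + 1) - 1 : ℤ) = i - t by ring]
  exact hc.symm

/-- Collapse a two-colored infinite path to an alternating one. -/
lemma collapse_path (hH1 : hypH1 p) (f : ℤ → ℤ) (col : ℤ → Bool)
    (hinj : Function.Injective f)
    (hedge : ∀ i, cedge p v1 v2 (col i) (f i) (f (i + 1)))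
    (htc : ∃ i j, col i ≠ col j) :
    ∃ (F : ℤ → ℤ) (COL : ℤ → Bool), Function.Injective F ∧
      (∀ k, cedge p v1 v2 (COL k) (F k) (F (k + 1))) ∧
      (∀ k, COL k ≠ COL (k + 1)) := by
  classical
  have hR : ∀ i : ℤ, ∃ t : ℕ, col (i + t) ≠ col (i + t + 1) :=
    exists_chg_right p v1 v2 hH1 f col hinj hedge
  have hL : ∀ i : ℤ, ∃ t : ℕ, col (i - t) ≠ col (i - t + 1) :=
    exists_chg_left p v1 v2 hH1 f col hinj hedge
  set nxt : ℤ → ℤ := fun i => i + Nat.find (hR i) with hnxt_def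
  set prv : ℤ → ℤ := fun i => (i - 1) - Nat.find (hL (i - 1)) with hprv_def
  have hnxt1 : ∀ i, i ≤ nxt i := fun i => by simp only [hnxt_def]; omega
  have hnxt2 : ∀ i, col (nxt i) ≠ col (nxt i + 1) := fun i => Nat.find_spec (hR i)
  have hnxt3 : ∀ i c, i ≤ c → c < nxt i → col c = col (c + 1) := by
    intro i c h1 h2
    have hlt : (c - i).toNat < Nat.find (hR i) := by
      simp only [hnxt_def] at h2; omega
    have := Nat.find_min (hR i) hlt
    push_neg at this
    rwa [show i + (((c - i).toNat : ℕ) : ℤ) = c by omega] at this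
  have hprv1 : ∀ i, prv i < i := fun i => by simp only [hprv_def]; omega
  have hprv2 : ∀ i, col (prv i) ≠ col (prv i + 1) := by
    intro i
    simpa only [hprv_def] using Nat.find_spec (hL (i - 1))
  have hprv3 : ∀ i c, prv i < c → c < i → col c = col (c + 1) := by
    intro i c h1 h2
    have hlt : (i - 1 - c).toNat < Nat.find (hL (i - 1)) := by
      simp only [hprv_def] at h1; omega
    have := Nat.find_min (hL (i - 1)) hlt
    push_neg at this
    rwa [show i - 1 - (((i - 1 - c).toNat : ℕ) : ℤ) = c by omega] at this
  -- enumerate change points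
  set G : ℕ → ℤ := fun k => Nat.rec (nxt 0) (fun _ x => nxt (x + 1)) k with hG_def
  set H : ℕ → ℤ := fun k => Nat.rec (nxt 0) (fun _ x => prv x) k with hH_def
  set g : ℤ → ℤ := fun k => if 0 ≤ k then G k.toNat else H (-k).toNat with hg_def
  have hGchg : ∀ t : ℕ, col (G t) ≠ col (G t + 1) := by
    intro t; cases t with
    | zero => exact hnxt2 0
    | succ t => exact hnxt2 _
  have hHchg : ∀ t : ℕ, col (H t) ≠ col (H t + 1) := by
    intro t; cases t with
    | zero => exact hnxt2 0
    | succ t => exact hprv2 _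
  have hgchg : ∀ k : ℤ, col (g k) ≠ col (g k + 1) := by
    intro k
    by_cases h : 0 ≤ k
    · simp only [hg_def, if_pos h]; exact hGchg _
    · simp only [hg_def, if_neg h]; exact hHchg _
  have key2 : ∀ k : ℤ, g k < g (k + 1) ∧ ∀ c, g k < c → c < g (k + 1) → col c = col (c + 1) := by
    intro k
    rcases le_or_gt 0 k with hk | hk
    · have h1 : g k = G k.toNat := by simp only [hg_def, if_pos hk]
      have h2 : g (k + 1) = G (k.toNat + 1) := by
        simp only [hg_def, if_pos (show (0:ℤ) ≤ k + 1 by omega)]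
        rw [show (k + 1).toNat = k.toNat + 1 by omega]
      have h3 : G (k.toNat + 1) = nxt (G k.toNat + 1) := rfl
      constructor
      · rw [h1, h2, h3]; have := hnxt1 (G k.toNat + 1); omega
      · intro c hc1 hc2
        rw [h1] at hc1; rw [h2, h3] at hc2
        exact hnxt3 (G k.toNat + 1) c (by omega) hc2
    · have h2 : g (k + 1) = H (-(k+1)).toNat := by
        rcases eq_or_lt_of_le (show k + 1 ≤ 0 by omega) with he | hlt
        · rw [he]
          show g 0 = H (0 : ℤ).toNat
          simp only [hg_def, if_pos le_rfl]
          rfl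
        · simp only [hg_def, if_neg (show ¬ (0:ℤ) ≤ k + 1 by omega)]
      have h1 : g k = H ((-(k+1)).toNat + 1) := by
        simp only [hg_def, if_neg (show ¬ (0:ℤ) ≤ k by omega)]
        rw [show (-k).toNat = (-(k+1)).toNat + 1 by omega]
      have h3 : H ((-(k+1)).toNat + 1) = prv (H (-(k+1)).toNat) := rfl
      constructor
      · rw [h1, h2, h3]; exact hprv1 _
      · intro c hc1 hc2
        rw [h1, h3] at hc1; rw [h2] at hc2
        exact hprv3 (H (-(k+1)).toNat) c hc1 hc2
  have hgmono : StrictMono g := strictMono_int_of_lt_succ (fun k => (key2 k).1)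
  -- constancy of color on blocks
  have hconst : ∀ k c : ℤ, g k + 1 ≤ c → c ≤ g (k + 1) → col c = col (g k + 1) := by
    intro k
    refine Int.le_induction ?_ ?_
    · intro _; rfl
    · intro n hn ih hle
      have h1 : col n = col (n + 1) := (key2 k).2 n (by omega) (by omega)
      rw [← h1]; exact ih (by omega)
  have hlam : ∀ (k : ℤ) (c : ℤ), g k + 1 ≤ c → c ≤ g (k + 1) + 1 →
      lamk p (if col (g k + 1) then v1 else v2) (f c)
        = lamk p (if col (g k + 1) then v1 else v2) (f (g k + 1)) := by
    intro k
    refine Int.le_induction ?_ ?_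
    · intro _; rfl
    · intro n hn ih hle
      have hcn : col n = col (g k + 1) := hconst k n hn (by omega)
      have he := (hedge n).2
      rw [hcn] at he
      rw [← he]; exact ih (by omega)
  refine ⟨fun k => f (g k + 1), fun k => col (g k + 1), ?_, ?_, ?_⟩
  · intro a b hab
    have h1 := hinj hab
    exact hgmono.injective (by omega : g a = g b)
  · intro k
    refine ⟨?_, ?_⟩
    · intro hcon
      have h1 := hinj hcon
      have := (key2 k).1
      omega
    · exact (hlam k (g (k + 1) + 1) (by have := (key2 k).1; omega) le_rfl).symm
  · intro k
    show col (g k + 1) ≠ col (g (k + 1) + 1)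
    have hc1 : col (g (k + 1)) = col (g k + 1) :=
      hconst k (g (k + 1)) (by have := (key2 k).1; omega) le_rfl
    have hc2 := hgchg (k + 1)
    exact fun h => hc2 (hc1.trans h)

end

section
variable (p : ℤ → ℝ) (v1 v2 : ℝ)

lemma path_vertex_reduced (f : ℤ → ℤ) (col : ℤ → Bool) (hinj : Function.Injective f)
    (hedge : ∀ i, cedge p v1 v2 (col i) (f i) (f (i + 1)))
    (halt : ∀ i, col i ≠ col (i + 1)) (i : ℤ) : f i ∈ ReducedV p v1 v2 := by
  constructor
  · exact mem_piv_of_edge p v1 v2 (hedge i)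
  · intro hgood
    have hinfty : ∀ b : Bool, (Portion p v1 v2 b (f i)).Infinite := by
      intro b
      have hne : col (i - 1) ≠ col i := by
        have := halt (i - 1)
        rwa [show i - 1 + 1 = i by ring] at this
      rcases Bool.eq_false_or_eq_true b with hb | hb <;>
      · rcases Bool.eq_false_or_eq_true (col i) with hci | hci
        all_goals rcases Bool.eq_false_or_eq_true (col (i - 1)) with hci' | hci'
        all_goals first
          | (exact absurd (hci'.trans hci.symm) hne)
          | (rw [hb, ← hci]; exact portion_right_infinite p v1 v2 f col hinj hedge i)
          | (rw [hb, ← hci']; exact portion_left_infinite p v1 v2 f col hinj hedge i)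
    rcases hgood with h | h
    · exact (hinfty true) h.1
    · exact (hinfty false) h.1

lemma infpath_iff (hH1 : hypH1 p) :
    TwoColInfPathIn p v1 v2 (ReducedV p v1 v2) ↔ TwoColInfPathIn p v1 v2 Set.univ := by
  constructor
  · rintro ⟨f, col, hinj, hmem, hedge, htc⟩
    exact ⟨f, col, hinj, fun i => trivial, hedge, htc⟩
  · rintro ⟨f, col, hinj, hmem, hedge, htc⟩
    obtain ⟨F, COL, hFinj, hFedge, hFalt⟩ :=
      collapse_path p v1 v2 hH1 f col hinj hedge htc
    exact ⟨F, COL, hFinj,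
      fun i => path_vertex_reduced p v1 v2 F COL hFinj hFedge hFalt i,
      hFedge, 0, 1, by simpa using hFalt 0⟩

end

section
variable (p : ℤ → ℝ) (v1 v2 : ℝ)

lemma connTo_cycle (n : ℕ) (f : ZMod (n+3) → ℤ) (col : ZMod (n+3) → Bool)
    (hinj : Function.Injective f)
    (hedge : ∀ x, cedge p v1 v2 (col x) (f x) (f (x+1))) (i j : ZMod (n+3)) :
    ConnTo p v1 v2 (col (i - 1)) (f j) (f i) := by
  by_cases hji : j = i
  · exact Or.inl (by rw [hji])
  right
  have hne : i - j ≠ 0 := sub_ne_zero.mpr (Ne.symm hji)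
  set d := (i - j).val with hd_def
  have hd0 : d ≠ 0 := fun h => hne ((ZMod.val_eq_zero _).mp h)
  have hdlt : d < n + 3 := ZMod.val_lt _
  have hd1 : 1 ≤ d := Nat.one_le_iff_ne_zero.mpr hd0
  have hcast : ((d : ℕ) : ZMod (n+3)) = i - j := by
    rw [hd_def, ZMod.natCast_val, ZMod.cast_id]
  refine ⟨d - 1, fun t => f (j + ((t.val : ℕ) : ZMod (n+3))),
    fun t => col (j + ((t.val : ℕ) : ZMod (n+3))), ?_, ?_, ?_, ?_, ?_⟩
  · intro a b hab
    have h1 := hinj hab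
    have h2 : ((a.val : ℕ) : ZMod (n+3)) = ((b.val : ℕ) : ZMod (n+3)) :=
      add_left_cancel h1
    have h3 : a.val % (n+3) = b.val % (n+3) := by
      rw [← ZMod.val_natCast, ← ZMod.val_natCast, h2]
    have ha : a.val < n + 3 := lt_of_lt_of_le a.isLt (by omega)
    have hb : b.val < n + 3 := lt_of_lt_of_le b.isLt (by omega)
    exact Fin.ext (by rwa [Nat.mod_eq_of_lt ha, Nat.mod_eq_of_lt hb] at h3)
  · intro t
    show cedge p v1 v2 (col (j + ((t.val : ℕ) : ZMod (n+3))))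
      (f (j + ((t.castSucc.val : ℕ) : ZMod (n+3)))) (f (j + ((t.succ.val : ℕ) : ZMod (n+3))))
    have h1 : (t.castSucc.val : ℕ) = t.val := rfl
    have h2 : ((t.succ.val : ℕ) : ZMod (n+3)) = ((t.val : ℕ) : ZMod (n+3)) + 1 := by
      rw [Fin.val_succ]; push_cast; ring
    rw [h1, h2, ← add_assoc]
    exact hedge (j + ((t.val : ℕ) : ZMod (n+3)))
  · show f (j + (((0 : Fin (d-1+2)).val : ℕ) : ZMod (n+3))) = f j
    simp
  · show f (j + (((Fin.last (d-1+1)).val : ℕ) : ZMod (n+3))) = f i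
    have h0 : (Fin.last (d-1+1)).val = d := by
      simp only [Fin.val_last]; omega
    rw [h0, hcast]; congr 1; ring
  · show col (j + (((Fin.last (d-1)).val : ℕ) : ZMod (n+3))) = col (i - 1)
    have h0 : (Fin.last (d-1)).val = d - 1 := rfl
    have h1 : (((d - 1 : ℕ)) : ZMod (n+3)) = ((d : ℕ) : ZMod (n+3)) - 1 := by
      rw [show d = (d - 1) + 1 by omega]
      push_cast
      ring_nf
    rw [h0, h1, hcast]; congr 1; ring
  
lemma connTo_cycle' (n : ℕ) (f : ZMod (n+3) → ℤ) (col : ZMod (n+3) → Bool)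
    (hinj : Function.Injective f)
    (hedge : ∀ x, cedge p v1 v2 (col x) (f x) (f (x+1))) (i j : ZMod (n+3)) :
    ConnTo p v1 v2 (col i) (f j) (f i) := by
  have hinj' : Function.Injective (fun x : ZMod (n+3) => f (-x)) := by
    intro a b hab
    have := hinj hab
    exact neg_injective this
  have hedge' : ∀ x, cedge p v1 v2 ((fun x => col (-x - 1)) x)
      ((fun x => f (-x)) x) ((fun x => f (-x)) (x + 1)) := by
    intro x
    have := cedge_symm p v1 v2 (hedge (-x - 1))
    have e1 : -x - 1 + 1 = -x := by ring
    have e2 : (-(x + 1) : ZMod (n+3)) = -x - 1 := by ring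
    rw [e1] at this
    simpa [e2] using this
  have := connTo_cycle p v1 v2 n _ _ hinj' hedge' (-i) (-j)
  simpa [show (-(-i - 1) - 1 : ZMod (n+3)) = i by ring] using this

lemma cycle_vertex_reduced (n : ℕ) (f : ZMod (n+3) → ℤ) (col : ZMod (n+3) → Bool)
    (hinj : Function.Injective f)
    (hedge : ∀ x, cedge p v1 v2 (col x) (f x) (f (x+1)))
    (halt : ∀ x, col x ≠ col (x+1)) (i : ZMod (n+3)) : f i ∈ ReducedV p v1 v2 := by
  constructor
  · exact mem_piv_of_edge p v1 v2 (hedge i)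
  · intro hgood
    have hcyc : ∀ b : Bool, TwoColCycleIn p v1 v2 (Portion p v1 v2 b (f i)) := by
      intro b
      have hne : col (i - 1) ≠ col i := by
        have := halt (i - 1)
        rwa [show i - 1 + 1 = i by ring] at this
      have hmem : ∀ j, f j ∈ Portion p v1 v2 b (f i) := by
        intro j
        rcases Bool.eq_false_or_eq_true b with hb | hb <;>
          rcases Bool.eq_false_or_eq_true (col i) with hci | hci <;>
          rcases Bool.eq_false_or_eq_true (col (i-1)) with hci' | hci' <;>
          first
            | exact absurd (hci'.trans hci.symm) hne
            | (rw [hb, ← hci]; exact connTo_cycle' p v1 v2 n f col hinj hedge i j)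
            | (rw [hb, ← hci']; exact connTo_cycle p v1 v2 n f col hinj hedge i j)
      exact ⟨n, f, col, hinj, hmem, hedge, 0, 1, by simpa using halt 0⟩
    rcases hgood with h | h
    · exact h.2 (hcyc true)
    · exact h.2 (hcyc false)

lemma no_two_cycle (hv : v1 ≠ v2) (F : ZMod 2 → ℤ) (COL : ZMod 2 → Bool)
    (hedge : ∀ x, cedge p v1 v2 (COL x) (F x) (F (x+1)))
    (htc : ∃ a b, COL a ≠ COL b) : False := by
  obtain ⟨a, b, hab⟩ := htc
  have hz : ∀ x : ZMod 2, x = 0 ∨ x = 1 := by decide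
  have h01 : COL 0 ≠ COL 1 := by
    rcases hz a with rfl | rfl <;> rcases hz b with rfl | rfl
    · exact absurd rfl hab
    · exact hab
    · exact fun h => hab h.symm
    · exact absurd rfl hab
  have e0 := hedge 0
  have e1 := hedge 1
  rw [show (1 + 1 : ZMod 2) = 0 by decide] at e1
  have e1' := cedge_symm p v1 v2 e1
  rw [show ((0 : ZMod 2) + 1) = 1 by decide] at e0
  rcases Bool.eq_false_or_eq_true (COL 0) with h0 | h0 <;>
    rcases Bool.eq_false_or_eq_true (COL 1) with h1 | h1
  · exact h01 (h0.trans h1.symm)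
  · rw [h0] at e0; rw [h1] at e1'
    exact no_bicolor p v1 v2 hv e0 e1'
  · rw [h0] at e0; rw [h1] at e1'
    exact no_bicolor p v1 v2 hv e1' e0
  · exact h01 (h0.trans h1.symm)

lemma shortcut (n : ℕ) (f : ZMod (n+3) → ℤ) (col : ZMod (n+3) → Bool)
    (hinj : Function.Injective f)
    (hedge : ∀ x, cedge p v1 v2 (col x) (f x) (f (x+1)))
    (heq : col ((n+1 : ℕ) : ZMod (n+3)) = col ((n+2 : ℕ) : ZMod (n+3))) :
    ∃ (F : ZMod (n+2) → ℤ) (COL : ZMod (n+2) → Bool), Function.Injective F ∧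
      (∀ x, cedge p v1 v2 (COL x) (F x) (F (x+1))) ∧
      (∀ x : ZMod (n+3), ∃ y : ZMod (n+2), COL y = col x) := by
  refine ⟨fun y => f ((y.val : ℕ) : ZMod (n+3)), fun y => col ((y.val : ℕ) : ZMod (n+3)),
    ?_, ?_, ?_⟩
  · intro a b hab
    have h1 := hinj hab
    have h3 : a.val % (n+3) = b.val % (n+3) := by
      rw [← ZMod.val_natCast, ← ZMod.val_natCast, h1]
    have ha : a.val < n + 3 := lt_of_lt_of_le (ZMod.val_lt a) (by omega)
    have hb : b.val < n + 3 := lt_of_lt_of_le (ZMod.val_lt b) (by omega)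
    rw [Nat.mod_eq_of_lt ha, Nat.mod_eq_of_lt hb] at h3
    calc a = ((a.val : ℕ) : ZMod (n+2)) := by rw [ZMod.natCast_val, ZMod.cast_id]
    _ = ((b.val : ℕ) : ZMod (n+2)) := by rw [h3]
    _ = b := by rw [ZMod.natCast_val, ZMod.cast_id]
  · intro y
    have hvlt : y.val < n + 2 := ZMod.val_lt y
    have hyv : ((y.val : ℕ) : ZMod (n+2)) = y := by rw [ZMod.natCast_val, ZMod.cast_id]
    have hy1 : (y + 1).val = (y.val + 1) % (n + 2) := by
      have h : ((y.val + 1 : ℕ) : ZMod (n+2)) = y + 1 := by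
        rw [Nat.cast_add, Nat.cast_one, hyv]
      rw [← h, ZMod.val_natCast]
    show cedge p v1 v2 (col ((y.val : ℕ) : ZMod (n+3)))
      (f ((y.val : ℕ) : ZMod (n+3))) (f (((y+1).val : ℕ) : ZMod (n+3)))
    rcases Nat.lt_or_ge (y.val + 1) (n+2) with hlt | hge
    · rw [hy1, Nat.mod_eq_of_lt hlt]
      rw [show ((y.val + 1 : ℕ) : ZMod (n+3)) = ((y.val : ℕ) : ZMod (n+3)) + 1 by push_cast; ring]
      exact hedge ((y.val : ℕ) : ZMod (n+3))
    · have hyval : y.val = n + 1 := by omega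
      have hy0 : (y + 1).val = 0 := by rw [hy1, hyval]; simp
      rw [hy0, hyval]
      have e1 := hedge ((n+1 : ℕ) : ZMod (n+3))
      have e2 := hedge ((n+2 : ℕ) : ZMod (n+3))
      rw [show ((n+1 : ℕ) : ZMod (n+3)) + 1 = ((n+2:ℕ) : ZMod (n+3)) by push_cast; ring] at e1
      rw [show ((n+2 : ℕ) : ZMod (n+3)) + 1 = ((n+3 : ℕ) : ZMod (n+3)) by push_cast; ring,
        ZMod.natCast_self] at e2
      rw [← heq] at e2
      refine ⟨?_, by rw [Nat.cast_zero]; exact e1.2.trans e2.2⟩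
      rw [Nat.cast_zero]
      intro hcon
      apply hinj at hcon
      have h := congrArg ZMod.val hcon
      rw [ZMod.val_natCast_of_lt (show n+1 < n+3 by omega), ZMod.val_zero] at h
      omega
  · intro x
    rcases Nat.lt_or_ge x.val (n+2) with hlt | hge
    · refine ⟨((x.val : ℕ) : ZMod (n+2)), ?_⟩
      show col (((((x.val : ℕ) : ZMod (n+2))).val : ℕ) : ZMod (n+3)) = col x
      rw [ZMod.val_natCast, Nat.mod_eq_of_lt hlt, ZMod.natCast_val, ZMod.cast_id]
    · have hx : x.val = n + 2 := by have := ZMod.val_lt x; omega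
      refine ⟨((n+1 : ℕ) : ZMod (n+2)), ?_⟩
      show col (((((n+1 : ℕ) : ZMod (n+2))).val : ℕ) : ZMod (n+3)) = col x
      have hval : (((n+1 : ℕ) : ZMod (n+2))).val = n+1 := ZMod.val_natCast_of_lt (by omega)
      rw [hval, heq]
      congr 1
      rw [← hx, ZMod.natCast_val, ZMod.cast_id]

lemma collapse_step (n : ℕ) (f : ZMod (n+3) → ℤ) (col : ZMod (n+3) → Bool)
    (hinj : Function.Injective f)
    (hedge : ∀ x, cedge p v1 v2 (col x) (f x) (f (x+1)))
    (htc : ∃ a b, col a ≠ col b)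
    (i0 : ZMod (n+3)) (hi0 : col i0 = col (i0 + 1)) :
    ∃ (F : ZMod (n+2) → ℤ) (COL : ZMod (n+2) → Bool), Function.Injective F ∧
      (∀ x, cedge p v1 v2 (COL x) (F x) (F (x+1))) ∧
      (∃ a b, COL a ≠ COL b) := by
  set c : ZMod (n+3) := i0 - ((n+1 : ℕ) : ZMod (n+3)) with hc_def
  have hinj' : Function.Injective (fun x : ZMod (n+3) => f (x + c)) := by
    intro a b hab
    have := hinj hab
    exact add_right_cancel this
  have hedge' : ∀ x, cedge p v1 v2 ((fun x => col (x + c)) x)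
      ((fun x => f (x + c)) x) ((fun x => f (x + c)) (x + 1)) := by
    intro x
    have := hedge (x + c)
    simpa [show x + 1 + c = x + c + 1 by ring] using this
  have heq' : (fun x => col (x + c)) ((n+1 : ℕ) : ZMod (n+3))
      = (fun x => col (x + c)) ((n+2 : ℕ) : ZMod (n+3)) := by
    show col (((n+1 : ℕ) : ZMod (n+3)) + c) = col (((n+2 : ℕ) : ZMod (n+3)) + c)
    rw [show (((n+1 : ℕ) : ZMod (n+3)) + c) = i0 by rw [hc_def]; ring,
      show (((n+2 : ℕ) : ZMod (n+3)) + c) = i0 + 1 by rw [hc_def]; push_cast; ring]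
    exact hi0
  obtain ⟨F, COL, hFinj, hFedge, hsurj⟩ :=
    shortcut p v1 v2 n (fun x => f (x + c)) (fun x => col (x + c)) hinj' hedge' heq'
  refine ⟨F, COL, hFinj, hFedge, ?_⟩
  obtain ⟨a, b, hab⟩ := htc
  obtain ⟨ya, hya⟩ := hsurj (a - c)
  obtain ⟨yb, hyb⟩ := hsurj (b - c)
  refine ⟨ya, yb, ?_⟩
  rw [hya, hyb]
  show col (a - c + c) ≠ col (b - c + c)
  rwa [sub_add_cancel, sub_add_cancel]

lemma collapse_cycle (hv : v1 ≠ v2) (n : ℕ) :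
    ∀ (f : ZMod (n+3) → ℤ) (col : ZMod (n+3) → Bool),
      Function.Injective f →
      (∀ x, cedge p v1 v2 (col x) (f x) (f (x+1))) →
      (∃ a b, col a ≠ col b) →
      ∃ (m : ℕ) (F : ZMod (m+3) → ℤ) (COL : ZMod (m+3) → Bool),
        Function.Injective F ∧ (∀ x, cedge p v1 v2 (COL x) (F x) (F (x+1))) ∧
        (∀ x, COL x ≠ COL (x+1)) := by
  induction n with
  | zero =>
    intro f col hinj hedge htc
    by_cases halt : ∀ x, col x ≠ col (x+1)
    · exact ⟨0, f, col, hinj, hedge, halt⟩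
    · push_neg at halt
      obtain ⟨i0, hi0⟩ := halt
      obtain ⟨F, COL, hFinj, hFedge, hFtc⟩ :=
        collapse_step p v1 v2 0 f col hinj hedge htc i0 hi0
      exact absurd hFtc (fun h => (no_two_cycle p v1 v2 hv F COL hFedge h))
  | succ n ih =>
    intro f col hinj hedge htc
    by_cases halt : ∀ x, col x ≠ col (x+1)
    · exact ⟨n + 1, f, col, hinj, hedge, halt⟩
    · push_neg at halt
      obtain ⟨i0, hi0⟩ := halt
      obtain ⟨F, COL, hFinj, hFedge, hFtc⟩ :=
        collapse_step p v1 v2 (n+1) f col hinj hedge htc i0 hi0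
      exact ih F COL hFinj hFedge hFtc

lemma cycle_iff (hv : v1 ≠ v2) :
    TwoColCycleIn p v1 v2 (ReducedV p v1 v2) ↔ TwoColCycleIn p v1 v2 Set.univ := by
  constructor
  · rintro ⟨n, f, col, hinj, hmem, hedge, htc⟩
    exact ⟨n, f, col, hinj, fun i => trivial, hedge, htc⟩
  · rintro ⟨n, f, col, hinj, hmem, hedge, htc⟩
    obtain ⟨m, F, COL, hFinj, hFedge, hFalt⟩ :=
      collapse_cycle p v1 v2 hv n f col hinj hedge htc
    exact ⟨m, F, COL, hFinj,
      fun i => cycle_vertex_reduced p v1 v2 m F COL hFinj hFedge hFalt i,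
      hFedge, 0, 1, by simpa using hFalt 0⟩

end

/-- G̃(v₁,v₂) contains a two-colored two-way infinite path (resp. two-colored cycle)
iff G(v₁,v₂) does. -/
theorem stmt_10 (p : ℤ → ℝ) (hH1 : hypH1 p) (hH2 : hypH2 p) (v1 v2 : ℝ) (hv : v1 ≠ v2) :
    (TwoColInfPathIn p v1 v2 (ReducedV p v1 v2) ↔ TwoColInfPathIn p v1 v2 Set.univ) ∧
    (TwoColCycleIn p v1 v2 (ReducedV p v1 v2) ↔ TwoColCycleIn p v1 v2 Set.univ) :=
  ⟨infpath_iff p v1 v2 hH1, cycle_iff p v1 v2 hv⟩
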